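/- The individual-based (node-level) closure fails even on a tree: for Markovian SI dynamics with infection rate τ > 0 on the open triplet, started from the pure initial configuration (I, S, S), for every t > 0 one has P_2(I;t) · P_3(S;t) > P_{23}(I,S;t); in particular the product of single-node marginals does not equal the pair marginal. -/

import Mathlib

open Finset

/-- Rate of a single off-diagonal transition for the Markovian SI model with states
`0 = S`, `1 = I`: nonzero only if `y` agrees with `x` except at exactly one node `i`,
where `S → I` occurs at rate `τ · #infectious neighbours`. -/
noncomputable def siRate {V : Type*} [Fintype V] [DecidableEq V] (G : SimpleGraph V)
    [DecidableRel G.Adj] (τ : ℝ) (x y : V → Fin 2) : ℝ :=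
  ∑ i : V,
    (if (∀ j, j ≠ i → x j = y j) ∧ x i = 0 ∧ y i = 1 then
        τ * ((Finset.univ.filter (fun j => G.Adj i j ∧ x j = 1)).card : ℝ) else 0)

/-- Generator matrix of the Markovian SI dynamics on configurations `V → Fin 2`. -/
noncomputable def siGen {V : Type*} [Fintype V] [DecidableEq V] (G : SimpleGraph V)
    [DecidableRel G.Adj] (τ : ℝ) : Matrix (V → Fin 2) (V → Fin 2) ℝ :=
  fun x y => if x = y then -∑ z ∈ Finset.univ.erase x, siRate G τ x z
             else siRate G τ x y

/-- Distribution at time `t` started from the pure configuration `x0`. -/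
noncomputable def siP {V : Type*} [Fintype V] [DecidableEq V] (G : SimpleGraph V)
    [DecidableRel G.Adj] (τ : ℝ) (x0 : V → Fin 2) (t : ℝ) (x : V → Fin 2) : ℝ :=
  NormedSpace.exp (t • siGen G τ) x0 x

/-- Single-node marginal `P_i(A;t)`. -/
noncomputable def siP1 {V : Type*} [Fintype V] [DecidableEq V] (G : SimpleGraph V)
    [DecidableRel G.Adj] (τ : ℝ) (x0 : V → Fin 2) (i : V) (A : Fin 2) (t : ℝ) : ℝ :=
  ∑ x ∈ Finset.univ.filter (fun x : V → Fin 2 => x i = A), siP G τ x0 t x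

/-- Pair marginal `P_{ij}(A,B;t)`. -/
noncomputable def siP2 {V : Type*} [Fintype V] [DecidableEq V] (G : SimpleGraph V)
    [DecidableRel G.Adj] (τ : ℝ) (x0 : V → Fin 2) (i j : V) (A B : Fin 2) (t : ℝ) : ℝ :=
  ∑ x ∈ Finset.univ.filter (fun x : V → Fin 2 => x i = A ∧ x j = B), siP G τ x0 t x

/-- Triple marginal `P_{ijk}(A,B,C;t)`. -/
noncomputable def siP3 {V : Type*} [Fintype V] [DecidableEq V] (G : SimpleGraph V)
    [DecidableRel G.Adj] (τ : ℝ) (x0 : V → Fin 2) (i j k : V) (A B C : Fin 2) (t : ℝ) : ℝ :=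
  ∑ x ∈ Finset.univ.filter (fun x : V → Fin 2 => x i = A ∧ x j = B ∧ x k = C),
    siP G τ x0 t x

/-- The open triplet: the graph on nodes `{0,1,2}` (representing `1,2,3`) with edges
`{0,1}` and `{1,2}`; node `1` is the middle node. -/
def openTriplet : SimpleGraph (Fin 3) where
  Adj i j := i ≠ j ∧ (i = 1 ∨ j = 1)
  symm := ⟨fun _ _ h => ⟨h.1.symm, h.2.symm⟩⟩
  loopless := ⟨fun _ h => h.1 rfl⟩

instance : DecidableRel openTriplet.Adj :=
  fun i j => inferInstanceAs (Decidable (i ≠ j ∧ (i = 1 ∨ j = 1)))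


namespace SIProof

/-- Intertwining: if `U * Q = M * U` then `U * exp Q = exp M * U`. -/
lemma intertwine {m n : Type*} [Fintype m] [Fintype n] [DecidableEq m] [DecidableEq n]
    (U : Matrix m n ℝ) (Q : Matrix n n ℝ) (M : Matrix m m ℝ) (h : U * Q = M * U) :
    U * NormedSpace.exp Q = NormedSpace.exp M * U := by
  letI : SeminormedRing (Matrix n n ℝ) := Matrix.linftyOpSemiNormedRing
  letI : NormedRing (Matrix n n ℝ) := Matrix.linftyOpNormedRing
  letI : NormedAlgebra ℝ (Matrix n n ℝ) := Matrix.linftyOpNormedAlgebra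
  letI : NormedRing (Matrix m m ℝ) := Matrix.linftyOpNormedRing
  letI : NormedAlgebra ℝ (Matrix m m ℝ) := Matrix.linftyOpNormedAlgebra
  letI : NormedAddCommGroup (Matrix m n ℝ) := Matrix.linftyOpNormedAddCommGroup
  letI : NormedSpace ℝ (Matrix m n ℝ) := Matrix.linftyOpNormedSpace
  have key : ∀ k : ℕ, U * Q ^ k = M ^ k * U := by
    intro k
    induction k with
    | zero => simp
    | succ k ih => rw [pow_succ, pow_succ, ← Matrix.mul_assoc, ih, Matrix.mul_assoc, h,
        ← Matrix.mul_assoc]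
  have hQ : Summable (fun k : ℕ => ((Nat.factorial k : ℝ))⁻¹ • Q ^ k) :=
    NormedSpace.expSeries_summable' Q
  have hM : Summable (fun k : ℕ => ((Nat.factorial k : ℝ))⁻¹ • M ^ k) :=
    NormedSpace.expSeries_summable' M
  let L : Matrix n n ℝ →ₗ[ℝ] Matrix m n ℝ :=
    { toFun := fun X => U * X
      map_add' := fun X Y => Matrix.mul_add U X Y
      map_smul' := fun c X => (Matrix.mul_smul U c X) }
  let R : Matrix m m ℝ →ₗ[ℝ] Matrix m n ℝ :=
    { toFun := fun X => X * U
      map_add' := fun X Y => Matrix.add_mul X Y U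
      map_smul' := fun c X => (Matrix.smul_mul c X U) }
  rw [NormedSpace.exp_eq_tsum ℝ, NormedSpace.exp_eq_tsum ℝ]
  have hL := (L.toContinuousLinearMap).map_tsum hQ
  have hR := (R.toContinuousLinearMap).map_tsum hM
  simp only [LinearMap.coe_toContinuousLinearMap', L, R, LinearMap.coe_mk, AddHom.coe_mk] at hL hR
  rw [hL, hR]
  congr 1
  funext k
  rw [Matrix.mul_smul, key, Matrix.smul_mul]

lemma exp_sq_zero {m : Type*} [Fintype m] [DecidableEq m] (N : Matrix m m ℝ) (h : N * N = 0) :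
    NormedSpace.exp N = 1 + N := by
  rw [NormedSpace.exp_eq_tsum ℝ]
  rw [show (fun x : Matrix m m ℝ => ∑' (n : ℕ), ((n.factorial : ℝ))⁻¹ • x ^ n) N
      = ∑' (n : ℕ), ((n.factorial : ℝ))⁻¹ • N ^ n from rfl,
    tsum_eq_sum (s := Finset.range 2)]
  · rw [Finset.sum_range_succ, Finset.sum_range_succ]
    simp
  · intro k hk
    have hk2 : 2 ≤ k := by simp at hk; omega
    have h2 : N ^ 2 = 0 := by rw [pow_two]; exact h
    have : N ^ k = 0 := pow_eq_zero_of_le hk2 h2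
    simp [this]

lemma eta3 (y : Fin 3 → Fin 2) : y = ![y 0, y 1, y 2] := by
  funext i; fin_cases i <;> simp

lemma fin2cases (a : Fin 2) : a = 0 ∨ a = 1 := by omega

lemma rateA (τ : ℝ) (z : Fin 3 → Fin 2) :
    siRate openTriplet τ ![1,0,0] z = if z = ![1,1,0] then τ else 0 := by
  have hc1 : (Finset.univ.filter
      (fun j => openTriplet.Adj 1 j ∧ (![1,0,0] : Fin 3 → Fin 2) j = 1)).card = 1 := by decide
  rw [eta3 z]
  rcases fin2cases (z 0) with h0 | h0 <;> rcases fin2cases (z 1) with h1 | h1 <;>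
    rcases fin2cases (z 2) with h2 | h2 <;>
    rw [h0, h1, h2] <;>
    simp (config := { decide := true }) [siRate, Fin.sum_univ_three, hc1]

lemma rateB (τ : ℝ) (z : Fin 3 → Fin 2) :
    siRate openTriplet τ ![1,1,0] z = if z = ![1,1,1] then τ else 0 := by
  have hc1 : (Finset.univ.filter
      (fun j => openTriplet.Adj 2 j ∧ (![1,1,0] : Fin 3 → Fin 2) j = 1)).card = 1 := by decide
  rw [eta3 z]
  rcases fin2cases (z 0) with h0 | h0 <;> rcases fin2cases (z 1) with h1 | h1 <;>
    rcases fin2cases (z 2) with h2 | h2 <;>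
    rw [h0, h1, h2] <;>
    simp (config := { decide := true }) [siRate, Fin.sum_univ_three, hc1]

lemma rateC (τ : ℝ) (z : Fin 3 → Fin 2) :
    siRate openTriplet τ ![1,1,1] z = 0 := by
  rw [eta3 z]
  rcases fin2cases (z 0) with h0 | h0 <;> rcases fin2cases (z 1) with h1 | h1 <;>
    rcases fin2cases (z 2) with h2 | h2 <;>
    rw [h0, h1, h2] <;>
    simp (config := { decide := true }) [siRate, Fin.sum_univ_three]

lemma genA (τ : ℝ) (y : Fin 3 → Fin 2) :
    siGen openTriplet τ ![1,0,0] y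
      = τ * (if y = ![1,1,0] then 1 else 0) - τ * (if y = ![1,0,0] then 1 else 0) := by
  simp only [siGen]
  by_cases hy : (![1,0,0] : Fin 3 → Fin 2) = y
  · rw [if_pos hy, ← hy]
    simp (config := { decide := true }) [rateA, Finset.sum_ite_eq']
  · rw [if_neg hy, rateA]
    have hy' : ¬ (y = ![1,0,0]) := fun h => hy h.symm
    rw [if_neg hy']
    by_cases hb : y = ![1,1,0] <;> simp [hb]

lemma genB (τ : ℝ) (y : Fin 3 → Fin 2) :
    siGen openTriplet τ ![1,1,0] y
      = τ * (if y = ![1,1,1] then 1 else 0) - τ * (if y = ![1,1,0] then 1 else 0) := by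
  simp only [siGen]
  by_cases hy : (![1,1,0] : Fin 3 → Fin 2) = y
  · rw [if_pos hy, ← hy]
    simp (config := { decide := true }) [rateB, Finset.sum_ite_eq']
  · rw [if_neg hy, rateB]
    have hy' : ¬ (y = ![1,1,0]) := fun h => hy h.symm
    rw [if_neg hy']
    by_cases hb : y = ![1,1,1] <;> simp [hb]

lemma genC (τ : ℝ) (y : Fin 3 → Fin 2) :
    siGen openTriplet τ ![1,1,1] y = 0 := by
  simp only [siGen]
  by_cases hy : (![1,1,1] : Fin 3 → Fin 2) = y
  · rw [if_pos hy]
    simp [rateC]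
  · rw [if_neg hy, rateC]

/-- indicator row vector -/
noncomputable def e (a : Fin 3 → Fin 2) : (Fin 3 → Fin 2) → ℝ := fun k => if k = a then 1 else 0

noncomputable def Umat : Matrix (Fin 3) (Fin 3 → Fin 2) ℝ :=
  Matrix.of ![fun k => e ![1,0,0] k - e ![1,1,1] k, fun k => e ![1,1,0] k - e ![1,1,1] k,
    e ![1,1,1]]

noncomputable def Mmat (τ : ℝ) : Matrix (Fin 3) (Fin 3) ℝ :=
  Matrix.of ![![-τ, τ, 0], ![0, -τ, 0], ![0, 0, 0]]

lemma sum_e_mul (a : Fin 3 → Fin 2) (f : (Fin 3 → Fin 2) → ℝ) :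
    ∑ k, e a k * f k = f a := by
  simp [e, ite_mul, Finset.sum_ite_eq']

lemma hUQ (τ : ℝ) : Umat * siGen openTriplet τ = Mmat τ * Umat := by
  ext i y
  fin_cases i <;>
    simp [Matrix.mul_apply, Umat, Mmat, Fin.sum_univ_three, sub_mul,
      Finset.sum_sub_distrib, sum_e_mul, genA, genB, genC, e, mul_ite, mul_one, mul_zero] <;>
    split_ifs <;> ring

lemma hE (τ t : ℝ) :
    NormedSpace.exp (t • Mmat τ) = Matrix.of
      ![![Real.exp (-(τ*t)), τ*t*Real.exp (-(τ*t)), 0],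
        ![0, Real.exp (-(τ*t)), 0], ![0, 0, 1]] := by
  set s := τ * t with hs
  have hsplit : t • Mmat τ = Matrix.diagonal ![-s, -s, 0]
      + Matrix.of ![![0, s, 0], ![0,0,0], ![0,0,0]] := by
    ext i j
    fin_cases i <;> fin_cases j <;>
      simp [Mmat, Matrix.diagonal, Matrix.smul_apply, Matrix.vecHead, Matrix.vecTail] <;> ring
  have hcomm : Commute (Matrix.diagonal ![-s, -s, 0])
      (Matrix.of ![![0, s, 0], ![0,0,0], ![0,0,0]]) := by
    show _ * _ = _ * _
    ext i j
    fin_cases i <;> fin_cases j <;>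
      simp [Matrix.mul_apply, Fin.sum_univ_three, Matrix.diagonal, Matrix.vecHead,
        Matrix.vecTail] <;> ring
  have hN2 : (Matrix.of ![![0, s, 0], ![0,0,0], ![0,0,0]] : Matrix (Fin 3) (Fin 3) ℝ)
      * Matrix.of ![![0, s, 0], ![0,0,0], ![0,0,0]] = 0 := by
    ext i j
    fin_cases i <;> fin_cases j <;>
      simp [Matrix.mul_apply, Fin.sum_univ_three, Matrix.vecHead, Matrix.vecTail]
  rw [hsplit, Matrix.exp_add_of_commute _ _ hcomm, Matrix.exp_diagonal,
    exp_sq_zero _ hN2]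
  ext i j
  fin_cases i <;> fin_cases j <;>
    simp [Matrix.mul_apply, Fin.sum_univ_three, Matrix.diagonal, Pi.exp_def, Matrix.vecHead,
      Matrix.vecTail, ← Real.exp_eq_exp_ℝ] <;> ring

lemma key (τ t : ℝ) (x : Fin 3 → Fin 2) :
    siP openTriplet τ ![1,0,0] t x =
      Real.exp (-(τ*t)) * e ![1,0,0] x
      + (τ*t*Real.exp (-(τ*t))) * e ![1,1,0] x
      + (1 - Real.exp (-(τ*t)) - τ*t*Real.exp (-(τ*t))) * e ![1,1,1] x := by
  have hswap : Umat * (t • siGen openTriplet τ) = (t • Mmat τ) * Umat := by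
    rw [Matrix.mul_smul, hUQ, Matrix.smul_mul]
  have hint := intertwine _ _ _ hswap
  rw [hE] at hint
  set P := NormedSpace.exp (t • siGen openTriplet τ) with hP
  have row : ∀ i : Fin 3, ∀ z : Fin 3 → Fin 2,
      (Umat * P) i z = ((Matrix.of
        ![![Real.exp (-(τ*t)), τ*t*Real.exp (-(τ*t)), 0],
          ![0, Real.exp (-(τ*t)), 0], ![0, 0, 1]]) * Umat) i z := by
    intro i z; rw [hint]
  have h0 := row 0 x
  have h2 := row 2 x
  simp only [Matrix.mul_apply, Umat, Matrix.of_apply, Matrix.cons_val', Matrix.cons_val_zero,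
    Matrix.cons_val_one, Matrix.head_cons, Fin.sum_univ_three, Matrix.cons_val_fin_one,
    Matrix.empty_val', Matrix.cons_val_succ, Matrix.cons_val_two, Matrix.tail_cons,
    sub_mul, Finset.sum_sub_distrib, sum_e_mul,
    Matrix.vecHead, Matrix.vecTail, Function.comp_apply, zero_mul, one_mul, mul_zero,
    add_zero, zero_add, mul_sub] at h0 h2
  show P ![1,0,0] x = _
  linear_combination h0 + h2
end SIProof

/-- The individual-based (node-level) closure fails even on a tree: for Markovian SI dynamics
on the open triplet started from `(I,S,S)`, for every `t > 0` the product of single-node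
marginals strictly exceeds the pair marginal: `P₂(I;t) · P₃(S;t) > P₂₃(I,S;t)`. -/
theorem si_individual_closure_fails
    (τ : ℝ) (hτ : 0 < τ) (t : ℝ) (ht : 0 < t) :
    siP2 openTriplet τ ![1, 0, 0] 1 2 1 0 t
      < siP1 openTriplet τ ![1, 0, 0] 1 1 t * siP1 openTriplet τ ![1, 0, 0] 2 0 t := by
  have hkey := SIProof.key τ t
  have hv2 : siP2 openTriplet τ ![1, 0, 0] 1 2 1 0 t = τ*t*Real.exp (-(τ*t)) := by
    rw [siP2]
    rw [Finset.sum_congr rfl (fun x _ => hkey x)]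
    simp only [Finset.sum_add_distrib, SIProof.e, mul_ite, mul_one, mul_zero,
      Finset.sum_ite_eq', Finset.mem_filter, Finset.mem_univ, true_and]
    norm_num
    simp [Matrix.cons_val_two, Matrix.vecHead, Matrix.vecTail]
  have hv1m : siP1 openTriplet τ ![1, 0, 0] 1 1 t = 1 - Real.exp (-(τ*t)) := by
    rw [siP1]
    rw [Finset.sum_congr rfl (fun x _ => hkey x)]
    simp only [Finset.sum_add_distrib, SIProof.e, mul_ite, mul_one, mul_zero,
      Finset.sum_ite_eq', Finset.mem_filter, Finset.mem_univ, true_and]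
    norm_num
  have hv1r : siP1 openTriplet τ ![1, 0, 0] 2 0 t
      = Real.exp (-(τ*t)) + τ*t*Real.exp (-(τ*t)) := by
    rw [siP1]
    rw [Finset.sum_congr rfl (fun x _ => hkey x)]
    simp only [Finset.sum_add_distrib, SIProof.e, mul_ite, mul_one, mul_zero,
      Finset.sum_ite_eq', Finset.mem_filter, Finset.mem_univ, true_and]
    norm_num
    simp [Matrix.cons_val_two, Matrix.vecHead, Matrix.vecTail]
  rw [hv2, hv1m, hv1r]
  set s := τ * t with hs
  have hspos : 0 < s := mul_pos hτ ht
  set u := Real.exp (-s) with hu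
  have hupos : 0 < u := Real.exp_pos _
  have h1s : u * (1 + s) < 1 := by
    have h := Real.add_one_lt_exp (x := s) (ne_of_gt hspos)
    rw [hu, Real.exp_neg]
    rw [inv_mul_eq_div, div_lt_one (Real.exp_pos s)]
    linarith
  nlinarith [mul_pos hupos (sub_pos.2 h1s)]
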